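/- Let θ ∈ (0, π/2) and x ≥ 0. For z > 1 define D(x,z) := (1/(2θ)) · ( ∫_{α=−arctan x}^{θ} ((x·z + cos α)/(z + sin α) − x) dα + ∫_{α=arctan x}^{θ} ((x·z − cos α)/(z + sin α) − x) dα ). Then lim_{z→∞} z · D(x,z) = x·cos θ / θ, i.e. the function z ↦ z·D(x,z) tends to x·cos θ/θ as z → ∞. -/

import Mathlib

open Real Filter Set intervalIntegral

/-- The conditional expected one-step increment of the slope process in the
directional growth model. -/
noncomputable def growthDrift (θ x z : ℝ) : ℝ :=
  (1 / (2 * θ)) *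
    ((∫ α in (-(Real.arctan x))..θ, ((x * z + Real.cos α) / (z + Real.sin α) - x)) +
     (∫ α in (Real.arctan x)..θ, ((x * z - Real.cos α) / (z + Real.sin α) - x)))

lemma aux_tendsto (x b c : ℝ) (f : ℝ → ℝ) (hf : Continuous f)
    (hbd : ∀ α, |f α| ≤ 1 + x) :
    Filter.Tendsto (fun z : ℝ => ∫ α in b..c, f α * (z / (z + Real.sin α))) Filter.atTop
      (nhds (∫ α in b..c, f α)) := by
  have hx1 : (0:ℝ) ≤ 1 + x := le_trans (abs_nonneg _) (hbd 0)
  rw [tendsto_iff_dist_tendsto_zero]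
  apply squeeze_zero' (g := fun z => (1 + x) * |c - b| / (z - 1))
    (Filter.Eventually.of_forall fun z => dist_nonneg)
  · filter_upwards [eventually_gt_atTop (2:ℝ)] with z hz
    have hz1 : (1:ℝ) < z := by linarith
    have hpos : ∀ α : ℝ, 0 < z + Real.sin α := fun α => by
      have := Real.neg_one_le_sin α; linarith
    have hcont : Continuous fun α => f α * (z / (z + Real.sin α)) :=
      hf.mul (continuous_const.div (continuous_const.add Real.continuous_sin)
        (fun α => (hpos α).ne'))
    have hint1 : IntervalIntegrable (fun α => f α * (z / (z + Real.sin α)))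
        MeasureTheory.volume b c := hcont.intervalIntegrable _ _
    have hint2 : IntervalIntegrable f MeasureTheory.volume b c := hf.intervalIntegrable _ _
    rw [dist_eq_norm, ← intervalIntegral.integral_sub hint1 hint2]
    calc ‖∫ α in b..c, (f α * (z / (z + Real.sin α)) - f α)‖
        ≤ (1 + x) / (z - 1) * |c - b| := by
          apply intervalIntegral.norm_integral_le_of_norm_le_const
          intro α _
          have h1 : f α * (z / (z + Real.sin α)) - f α
              = f α * (-Real.sin α) / (z + Real.sin α) := by
            field_simp [(hpos α).ne']
            ring
          rw [h1, Real.norm_eq_abs, abs_div, abs_mul, abs_neg]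
          have hnum : |f α| * |Real.sin α| ≤ (1 + x) * 1 :=
            mul_le_mul (hbd α) (Real.abs_sin_le_one α) (abs_nonneg _) hx1
          have hden : z - 1 ≤ |z + Real.sin α| := by
            rw [abs_of_pos (hpos α)]
            have := Real.neg_one_le_sin α; linarith
          calc |f α| * |Real.sin α| / |z + Real.sin α|
              ≤ ((1 + x) * 1) / (z - 1) :=
                div_le_div₀ (by positivity) hnum (by linarith) hden
            _ = (1 + x) / (z - 1) := by ring
      _ = (1 + x) * |c - b| / (z - 1) := by ring
  · have h1 : Filter.Tendsto (fun z : ℝ => z - 1) Filter.atTop Filter.atTop := by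
      simpa [sub_eq_add_neg] using Filter.tendsto_atTop_add_const_right Filter.atTop (-1) tendsto_id
    exact Filter.Tendsto.div_atTop tendsto_const_nhds h1

theorem stmt_0 (θ x : ℝ) (hθ : θ ∈ Set.Ioo 0 (Real.pi / 2)) (hx : 0 ≤ x) :
    Filter.Tendsto (fun z : ℝ => z * growthDrift θ x z) Filter.atTop
      (nhds (x * Real.cos θ / θ)) := by
  obtain ⟨hθ0, hθ2⟩ := hθ
  set a := Real.arctan x with ha
  -- the two limit functions
  set f₁ : ℝ → ℝ := fun α => Real.cos α - x * Real.sin α with hf₁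
  set f₂ : ℝ → ℝ := fun α => -Real.cos α - x * Real.sin α with hf₂
  have hf₁c : Continuous f₁ := Real.continuous_cos.sub (continuous_const.mul Real.continuous_sin)
  have hf₂c : Continuous f₂ :=
    (Real.continuous_cos.neg).sub (continuous_const.mul Real.continuous_sin)
  have hbd₁ : ∀ α, |f₁ α| ≤ 1 + x := by
    intro α
    calc |Real.cos α - x * Real.sin α| ≤ |Real.cos α| + |x * Real.sin α| := abs_sub _ _
      _ ≤ 1 + x := by
        have h1 := Real.abs_cos_le_one α
        have h2 : |x * Real.sin α| ≤ x := by
          rw [abs_mul, abs_of_nonneg hx]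
          nlinarith [Real.abs_sin_le_one α, abs_nonneg (Real.sin α)]
        linarith
  have hbd₂ : ∀ α, |f₂ α| ≤ 1 + x := by
    intro α
    calc |-Real.cos α - x * Real.sin α| ≤ |-Real.cos α| + |x * Real.sin α| := abs_sub _ _
      _ ≤ 1 + x := by
        rw [abs_neg]
        have h1 := Real.abs_cos_le_one α
        have h2 : |x * Real.sin α| ≤ x := by
          rw [abs_mul, abs_of_nonneg hx]
          nlinarith [Real.abs_sin_le_one α, abs_nonneg (Real.sin α)]
        linarith
  have T₁ := aux_tendsto x (-a) θ f₁ hf₁c hbd₁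
  have T₂ := aux_tendsto x a θ f₂ hf₂c hbd₂
  -- value of the limit integrals
  have hI₁ : (∫ α in (-a)..θ, f₁ α)
      = Real.sin θ + Real.sin a - x * (Real.cos a - Real.cos θ) := by
    rw [hf₁]
    beta_reduce
    rw [intervalIntegral.integral_sub (f := fun α => Real.cos α) (g := fun α => x * Real.sin α)
      (Real.continuous_cos.intervalIntegrable _ _)
      ((continuous_const.mul Real.continuous_sin).intervalIntegrable _ _),
      integral_cos, intervalIntegral.integral_const_mul,
      integral_sin]
    simp [Real.sin_neg, Real.cos_neg]
  have hI₂ : (∫ α in a..θ, f₂ α)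
      = -(Real.sin θ - Real.sin a) - x * (Real.cos a - Real.cos θ) := by
    rw [hf₂]
    have : (fun α => -Real.cos α - x * Real.sin α)
        = fun α => -(Real.cos α) - x * Real.sin α := rfl
    rw [this, intervalIntegral.integral_sub (f := fun α => -Real.cos α)
      (g := fun α => x * Real.sin α) ((Real.continuous_cos.neg).intervalIntegrable _ _)
      ((continuous_const.mul Real.continuous_sin).intervalIntegrable _ _),
      intervalIntegral.integral_neg, integral_cos,
      intervalIntegral.integral_const_mul, integral_sin]
  have hsa : Real.sin a = x * Real.cos a := by
    rw [ha, Real.sin_arctan, Real.cos_arctan]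
    ring
  -- transformed limit
  have hlim : (1 / (2 * θ)) * ((∫ α in (-a)..θ, f₁ α) + (∫ α in a..θ, f₂ α))
      = x * Real.cos θ / θ := by
    rw [hI₁, hI₂]
    have hθne : θ ≠ 0 := ne_of_gt hθ0
    field_simp
    nlinarith [hsa]
  have Tsum : Filter.Tendsto
      (fun z : ℝ => (1 / (2 * θ)) * ((∫ α in (-a)..θ, f₁ α * (z / (z + Real.sin α)))
        + (∫ α in a..θ, f₂ α * (z / (z + Real.sin α))))) Filter.atTop
      (nhds (x * Real.cos θ / θ)) := by
    rw [← hlim]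
    exact ((T₁.add T₂).const_mul _)
  apply Tsum.congr'
  filter_upwards [eventually_gt_atTop (2:ℝ)] with z hz
  have hz1 : (1:ℝ) < z := by linarith
  have hpos : ∀ α : ℝ, 0 < z + Real.sin α := fun α => by
    have := Real.neg_one_le_sin α; linarith
  have e₁ : (∫ α in (-a)..θ, f₁ α * (z / (z + Real.sin α)))
      = z * ∫ α in (-a)..θ, ((x * z + Real.cos α) / (z + Real.sin α) - x) := by
    rw [← intervalIntegral.integral_const_mul]
    apply intervalIntegral.integral_congr
    intro α _
    have h := (hpos α).ne'
    rw [hf₁]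
    field_simp
    ring
  have e₂ : (∫ α in a..θ, f₂ α * (z / (z + Real.sin α)))
      = z * ∫ α in a..θ, ((x * z - Real.cos α) / (z + Real.sin α) - x) := by
    rw [← intervalIntegral.integral_const_mul]
    apply intervalIntegral.integral_congr
    intro α _
    have h := (hpos α).ne'
    rw [hf₂]
    field_simp
    ring
  rw [e₁, e₂]
  simp only [growthDrift]
  ring
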